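/- Let λ: ℝ → ℂ be twice differentiable at 0, Z(t) = λ(t)E - A with Z(0) invertible, and G(λ(t)) = C Z(t)⁻¹ B + D. Then t ↦ G(λ(t)) is twice differentiable at 0 with second derivative 2λ'(0)² C Z(0)⁻¹ E Z(0)⁻¹ E Z(0)⁻¹ B - λ''(0) C Z(0)⁻¹ E Z(0)⁻¹ B. -/

import Mathlib

open Matrix Filter Set

noncomputable def specNorm {p m : ℕ} (A : Matrix (Fin p) (Fin m) ℂ) : ℝ :=
  ‖(Matrix.toEuclideanLin A).toContinuousLinearMap‖

noncomputable def pertSys {n m p : ℕ} (A : Matrix (Fin n) (Fin n) ℂ) (B : Matrix (Fin n) (Fin m) ℂ)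
    (C : Matrix (Fin p) (Fin n) ℂ) (D : Matrix (Fin p) (Fin m) ℂ)
    (Δ : Matrix (Fin m) (Fin p) ℂ) : Matrix (Fin n) (Fin n) ℂ :=
  A + B * Δ * (1 - D * Δ)⁻¹ * C

noncomputable def svSet {n m p : ℕ} (ε : ℝ) (A : Matrix (Fin n) (Fin n) ℂ)
    (B : Matrix (Fin n) (Fin m) ℂ) (C : Matrix (Fin p) (Fin n) ℂ)
    (D : Matrix (Fin p) (Fin m) ℂ) (E : Matrix (Fin n) (Fin n) ℂ) : Set ℂ :=
  {z | ∃ Δ : Matrix (Fin m) (Fin p) ℂ, specNorm Δ ≤ ε ∧ (z • E - pertSys A B C D Δ).det = 0}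

noncomputable def transferFn {n m p : ℕ} (A : Matrix (Fin n) (Fin n) ℂ)
    (B : Matrix (Fin n) (Fin m) ℂ) (C : Matrix (Fin p) (Fin n) ℂ)
    (D : Matrix (Fin p) (Fin m) ℂ) (E : Matrix (Fin n) (Fin n) ℂ) (z : ℂ) :
    Matrix (Fin p) (Fin m) ℂ :=
  C * (z • E - A)⁻¹ * B + D

attribute [local instance] Matrix.linftyOpNormedAddCommGroup Matrix.linftyOpNormedSpace
  Matrix.linftyOpNormedRing Matrix.linftyOpNormedAlgebra

section Aux
variable {n m p : ℕ}

/-- `X ↦ C * X * B` as a continuous linear map. -/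
noncomputable def sandwichCLM (C : Matrix (Fin p) (Fin n) ℂ) (B : Matrix (Fin n) (Fin m) ℂ) :
    Matrix (Fin n) (Fin n) ℂ →L[ℝ] Matrix (Fin p) (Fin m) ℂ :=
  LinearMap.toContinuousLinearMap
    { toFun := fun X => C * X * B
      map_add' := fun X Y => by simp [Matrix.mul_add, Matrix.add_mul]
      map_smul' := fun c X => by simp [Matrix.mul_smul, Matrix.smul_mul] }

@[simp] lemma sandwichCLM_apply (C : Matrix (Fin p) (Fin n) ℂ) (B : Matrix (Fin n) (Fin m) ℂ)
    (X : Matrix (Fin n) (Fin n) ℂ) : sandwichCLM C B X = C * X * B := rfl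

/-- Entry evaluation as a continuous linear map. -/
noncomputable def entryCLM (i : Fin p) (j : Fin m) :
    Matrix (Fin p) (Fin m) ℂ →L[ℝ] ℂ :=
  LinearMap.toContinuousLinearMap
    { toFun := fun X => X i j
      map_add' := fun _ _ => rfl
      map_smul' := fun _ _ => rfl }

@[simp] lemma entryCLM_apply (i : Fin p) (j : Fin m) (X : Matrix (Fin p) (Fin m) ℂ) :
    entryCLM i j X = X i j := rfl

lemma hasDerivAt_Zinv (A E : Matrix (Fin n) (Fin n) ℂ) (lam lamd : ℝ → ℂ)
    (hlam : ∀ t : ℝ, HasDerivAt lam (lamd t) t) {t : ℝ}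
    (ht : IsUnit (lam t • E - A)) :
    HasDerivAt (fun s : ℝ => ((lam s) • E - A)⁻¹)
      (-(lamd t) • ((lam t • E - A)⁻¹ * E * (lam t • E - A)⁻¹)) t := by
  have hZ : HasDerivAt (fun s : ℝ => lam s • E - A) (lamd t • E) t :=
    ((hlam t).smul_const E).sub_const A
  have h1 : HasFDerivAt Ring.inverse
      (-(ContinuousLinearMap.mulLeftRight ℝ _ (↑ht.unit⁻¹) (↑ht.unit⁻¹))) (lam t • E - A) := by
    simpa [ht.unit_spec] using hasFDerivAt_ringInverse (𝕜 := ℝ) ht.unit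
  have h2 := h1.comp_hasDerivAt t hZ
  simp only [Function.comp_def, ← Matrix.nonsing_inv_eq_ringInverse,
    ContinuousLinearMap.neg_apply, ContinuousLinearMap.mulLeftRight_apply,
    Matrix.coe_units_inv, ht.unit_spec] at h2
  refine h2.congr_deriv ?_
  simp [Matrix.mul_smul, Matrix.smul_mul, Matrix.mul_assoc]

end Aux

theorem transferFn_second_deriv {n m p : ℕ} (A E : Matrix (Fin n) (Fin n) ℂ)
    (B : Matrix (Fin n) (Fin m) ℂ) (C : Matrix (Fin p) (Fin n) ℂ)
    (D : Matrix (Fin p) (Fin m) ℂ) (lam : ℝ → ℂ) (lamd : ℝ → ℂ) (lam'' : ℂ)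
    (hlam : ∀ t : ℝ, HasDerivAt lam (lamd t) t)
    (hlam'' : HasDerivAt lamd lam'' 0)
    (hZ : IsUnit ((lam 0) • E - A)) :
    ∃ G1 : ℝ → Matrix (Fin p) (Fin m) ℂ,
      (∀ᶠ t : ℝ in nhds 0, ∀ i j,
        HasDerivAt (fun s : ℝ => (C * ((lam s) • E - A)⁻¹ * B + D) i j) (G1 t i j) t) ∧
      ∀ i j, HasDerivAt (fun t : ℝ => G1 t i j)
        ((((2 * (lamd 0) ^ 2) •
            (C * ((lam 0) • E - A)⁻¹ * E * ((lam 0) • E - A)⁻¹ * E * ((lam 0) • E - A)⁻¹ * B) -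
          lam'' • (C * ((lam 0) • E - A)⁻¹ * E * ((lam 0) • E - A)⁻¹ * B) :
            Matrix (Fin p) (Fin m) ℂ)) i j) 0 := by
  set Z : ℝ → Matrix (Fin n) (Fin n) ℂ := fun t => lam t • E - A with hZdef
  refine ⟨fun t => (-(lamd t)) • (sandwichCLM C B ((Z t)⁻¹ * (E * (Z t)⁻¹))), ?_, ?_⟩
  · -- eventual invertibility
    have hcont : Continuous fun t : ℝ => (Z t).det := by
      have : Continuous Z := by
        have hc : Continuous lam := by
          rw [continuous_iff_continuousAt]; exact fun t => (hlam t).continuousAt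
        fun_prop
      exact this.matrix_det
    have hne : (Z 0).det ≠ 0 := by
      intro h
      exact ((Matrix.isUnit_iff_isUnit_det _).mp hZ).ne_zero h
    have hev : ∀ᶠ t : ℝ in nhds 0, IsUnit (Z t) := by
      filter_upwards [hcont.continuousAt.eventually_ne hne] with t ht
      exact (Matrix.isUnit_iff_isUnit_det _).mpr (isUnit_iff_ne_zero.mpr ht)
    filter_upwards [hev] with t ht i j
    have hg : HasDerivAt (fun s : ℝ => sandwichCLM C B ((Z s)⁻¹) + D)
        (sandwichCLM C B (-(lamd t) • ((Z t)⁻¹ * E * (Z t)⁻¹))) t :=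
      ((sandwichCLM C B).hasFDerivAt.comp_hasDerivAt t
        (hasDerivAt_Zinv A E lam lamd hlam ht)).add_const D
    have key1 : sandwichCLM C B (-(lamd t) • ((Z t)⁻¹ * E * (Z t)⁻¹))
        = (-(lamd t)) • (sandwichCLM C B ((Z t)⁻¹ * (E * (Z t)⁻¹))) := by
      simp only [sandwichCLM_apply, Matrix.smul_mul, Matrix.mul_smul, Matrix.mul_assoc,
        neg_smul, Matrix.neg_mul, Matrix.mul_neg]
    rw [key1] at hg
    exact (entryCLM i j).hasFDerivAt.comp_hasDerivAt t hg
  · intro i j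
    have hinv0 := hasDerivAt_Zinv A E lam lamd hlam (t := 0) hZ
    have hq : HasDerivAt (fun t : ℝ => (Z t)⁻¹ * (E * (Z t)⁻¹))
        ((-(lamd 0) • ((Z 0)⁻¹ * E * (Z 0)⁻¹)) * (E * (Z 0)⁻¹)
          + (Z 0)⁻¹ * (E * (-(lamd 0) • ((Z 0)⁻¹ * E * (Z 0)⁻¹)))) 0 :=
      hinv0.mul (hinv0.const_mul E)
    have hN := (sandwichCLM C B).hasFDerivAt.comp_hasDerivAt 0 hq
    have hG1 := (hlam''.neg).smul hN
    have key2 : (-(lamd 0)) • (sandwichCLM C B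
          ((-(lamd 0) • ((Z 0)⁻¹ * E * (Z 0)⁻¹)) * (E * (Z 0)⁻¹)
            + (Z 0)⁻¹ * (E * (-(lamd 0) • ((Z 0)⁻¹ * E * (Z 0)⁻¹)))))
        + (-lam'') • (sandwichCLM C B ((Z 0)⁻¹ * (E * (Z 0)⁻¹)))
        = (2 * (lamd 0) ^ 2) • (C * (Z 0)⁻¹ * E * (Z 0)⁻¹ * E * (Z 0)⁻¹ * B)
          - lam'' • (C * (Z 0)⁻¹ * E * (Z 0)⁻¹ * B) := by
      simp only [sandwichCLM_apply, Matrix.mul_smul, Matrix.smul_mul, Matrix.mul_add,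
        Matrix.add_mul, Matrix.neg_mul, Matrix.mul_neg, smul_smul, neg_smul, smul_neg, neg_neg, Matrix.mul_assoc]
      module
    simp only [Function.comp_def] at hG1
    replace hG1 := hG1.congr_deriv key2
    exact (entryCLM i j).hasFDerivAt.comp_hasDerivAt 0 hG1
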